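/- (Halting I.) Let Φ be an m×d real matrix with restricted isometry constant δ_{2s} ≤ 0.1. Let x, a ∈ ℝ^d be s-sparse vectors, let e ∈ ℝ^m, set r = x − a, v = Φr + e, and y = Φ*v. Then: (i) if ‖v‖₂ ≤ ε then ‖x − a‖₂ ≤ 1.06 (ε + ‖e‖₂); (ii) if ‖y‖_∞ ≤ η/√(2s) then ‖x − a‖_∞ ≤ 1.12 η + 1.17 ‖e‖₂. -/

import Mathlib

/-- The Euclidean (ℓ2) norm of a finitely-indexed real vector. -/
noncomputable def l2 {ι : Type*} [Fintype ι] (v : ι → ℝ) : ℝ :=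
  Real.sqrt (∑ i, (v i) ^ 2)

/-- The supremum (ℓ∞) norm of a finitely-indexed real vector. -/
noncomputable def linf {ι : Type*} [Fintype ι] (v : ι → ℝ) : ℝ :=
  ⨆ i, |v i|

/-- A vector is `s`-sparse if it has at most `s` nonzero coordinates. -/
def Sparse {d : ℕ} (s : ℕ) (v : Fin d → ℝ) : Prop :=
  {i | v i ≠ 0}.ncard ≤ s

/-- `δ` satisfies the restricted isometry inequalities of `Φ` at sparsity level `r`
(quadratic form); `δ_r ≤ δ` is equivalent to this (for `δ ≥ 0`). -/
def RICq {m d : ℕ} (Φ : Matrix (Fin m) (Fin d) ℝ) (r : ℕ) (δ : ℝ) : Prop :=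
  ∀ v : Fin d → ℝ, Sparse r v →
    (1 - δ) * (l2 v) ^ 2 ≤ (l2 (Φ.mulVec v)) ^ 2 ∧
      (l2 (Φ.mulVec v)) ^ 2 ≤ (1 + δ) * (l2 v) ^ 2

lemma l2_nonneg' {ι : Type*} [Fintype ι] (v : ι → ℝ) : 0 ≤ l2 v := Real.sqrt_nonneg _

lemma l2_sq' {ι : Type*} [Fintype ι] (v : ι → ℝ) : (l2 v) ^ 2 = ∑ i, (v i) ^ 2 :=
  Real.sq_sqrt (by positivity)

lemma abs_le_l2' {ι : Type*} [Fintype ι] (v : ι → ℝ) (i : ι) : |v i| ≤ l2 v := by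
  rw [l2, ← Real.sqrt_sq_eq_abs]
  exact Real.sqrt_le_sqrt (Finset.single_le_sum (f := fun j => v j ^ 2)
    (fun _ _ => sq_nonneg _) (Finset.mem_univ i))

lemma inner_abs_le' {ι : Type*} [Fintype ι] (u v : ι → ℝ) : |∑ i, u i * v i| ≤ l2 u * l2 v := by
  rw [abs_le]
  constructor
  · have h := Real.sum_mul_le_sqrt_mul_sqrt Finset.univ (fun i => -u i) v
    have e1 : ∑ i, (-u i) * v i = -∑ i, u i * v i := by
      rw [← Finset.sum_neg_distrib]; exact Finset.sum_congr rfl fun i _ => by ring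
    have e2 : ∑ i, (-u i) ^ 2 = ∑ i, (u i) ^ 2 := Finset.sum_congr rfl fun i _ => by ring
    rw [e1, e2] at h
    simp only [l2]; linarith
  · simpa [l2] using Real.sum_mul_le_sqrt_mul_sqrt Finset.univ u v

lemma l2_add_le' {ι : Type*} [Fintype ι] (u v : ι → ℝ) : l2 (u + v) ≤ l2 u + l2 v := by
  have h : (l2 (u + v)) ^ 2 ≤ (l2 u + l2 v) ^ 2 := by
    rw [l2_sq']
    have hcs := (abs_le.1 (inner_abs_le' u v)).2
    have e : ∑ i, ((u + v) i) ^ 2 = (∑ i, (u i)^2) + (2 * (∑ i, u i * v i) + ∑ i, (v i)^2) := by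
      simp only [Pi.add_apply]
      rw [Finset.mul_sum, ← Finset.sum_add_distrib, ← Finset.sum_add_distrib]
      exact Finset.sum_congr rfl fun i _ => by ring
    rw [e, ← l2_sq' u, ← l2_sq' v]
    nlinarith [hcs]
  exact le_of_pow_le_pow_left₀ two_ne_zero (add_nonneg (l2_nonneg' u) (l2_nonneg' v)) h

lemma linf_nonneg' {ι : Type*} [Fintype ι] (v : ι → ℝ) : 0 ≤ linf v :=
  Real.iSup_nonneg fun _ => abs_nonneg _

lemma abs_le_linf' {ι : Type*} [Fintype ι] (v : ι → ℝ) (i : ι) : |v i| ≤ linf v :=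
  le_ciSup (f := fun j => |v j|) (Set.Finite.bddAbove (Set.finite_range _)) i

lemma transpose_inner' {m d : ℕ} (Φ : Matrix (Fin m) (Fin d) ℝ) (v : Fin m → ℝ)
    (r : Fin d → ℝ) : ∑ i, Φ.transpose.mulVec v i * r i = ∑ j, v j * Φ.mulVec r j := by
  simp only [Matrix.mulVec, Matrix.transpose_apply, dotProduct, Finset.sum_mul,
    Finset.mul_sum]
  rw [Finset.sum_comm]
  exact Finset.sum_congr rfl fun j _ => Finset.sum_congr rfl fun i _ => by ring

lemma l1_le_sqrt_mul_l2' {d : ℕ} (v : Fin d → ℝ) (k : ℕ) (hv : Sparse k v) :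
    ∑ i, |v i| ≤ Real.sqrt k * l2 v := by
  classical
  set T := Finset.univ.filter (fun i => v i ≠ 0) with hT
  have hTcard : T.card ≤ k := by
    have hset : {i | v i ≠ 0} = ↑T := by ext i; simp [hT]
    rw [Sparse, hset, Set.ncard_coe_finset] at hv
    exact hv
  have h1 : ∑ i, |v i| = ∑ i ∈ T, 1 * |v i| := by
    simp only [one_mul]
    refine (Finset.sum_subset (Finset.subset_univ T) fun i _ hi => ?_).symm
    simp only [hT, Finset.mem_filter, Finset.mem_univ, true_and, not_not] at hi
    simp [hi]
  rw [h1]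
  calc ∑ i ∈ T, 1 * |v i|
      ≤ Real.sqrt (∑ _i ∈ T, (1:ℝ)^2) * Real.sqrt (∑ i ∈ T, |v i|^2) :=
        Real.sum_mul_le_sqrt_mul_sqrt T _ _
    _ ≤ Real.sqrt k * l2 v := by
        apply mul_le_mul
        · apply Real.sqrt_le_sqrt; simp; exact_mod_cast hTcard
        · apply Real.sqrt_le_sqrt
          simp only [sq_abs]
          exact Finset.sum_le_sum_of_subset_of_nonneg (Finset.subset_univ T)
            fun i _ _ => sq_nonneg _
        · exact Real.sqrt_nonneg _
        · exact Real.sqrt_nonneg _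

/-- **Halting I.** -/
theorem stmt13 (m d s : ℕ) (hs : 0 < s)
    (Φ : Matrix (Fin m) (Fin d) ℝ) (hΦ : RICq Φ (2 * s) (1 / 10))
    (x a : Fin d → ℝ) (hx : Sparse s x) (ha : Sparse s a) (e : Fin m → ℝ)
    (ε η : ℝ) :
    (l2 (Φ.mulVec (x - a) + e) ≤ ε → l2 (x - a) ≤ 1.06 * (ε + l2 e)) ∧
    (linf (Φ.transpose.mulVec (Φ.mulVec (x - a) + e)) ≤ η / Real.sqrt (2 * (s : ℝ)) →
      linf (x - a) ≤ 1.12 * η + 1.17 * l2 e) := by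
  classical
  set r : Fin d → ℝ := x - a with hrdef
  have hsp : Sparse (2 * s) r := by
    have hsub : {i | r i ≠ 0} ⊆ {i | x i ≠ 0} ∪ {i | a i ≠ 0} := by
      intro i hi
      by_contra h
      simp only [Set.mem_union, Set.mem_setOf_eq, not_or, not_not] at h
      exact hi (by simp [hrdef, h.1, h.2])
    have h1 := Set.ncard_le_ncard hsub (Set.toFinite _)
    have h2 := Set.ncard_union_le {i | x i ≠ 0} {i | a i ≠ 0}
    unfold Sparse at *
    omega
  obtain ⟨hlow, hhigh⟩ := hΦ r hsp
  have hR : 0 ≤ l2 r := l2_nonneg' r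
  have hW : 0 ≤ l2 (Φ.mulVec r) := l2_nonneg' _
  have hE : 0 ≤ l2 e := l2_nonneg' e
  constructor
  · intro hv
    have htri : l2 (Φ.mulVec r) ≤ l2 (Φ.mulVec r + e) + l2 e := by
      have h1 : Φ.mulVec r = (Φ.mulVec r + e) + (-e) := by funext i; simp
      have h2 : l2 (-e) = l2 e := by simp [l2]
      calc l2 (Φ.mulVec r) = l2 ((Φ.mulVec r + e) + (-e)) := by rw [← h1]
        _ ≤ l2 (Φ.mulVec r + e) + l2 (-e) := l2_add_le' _ _
        _ = l2 (Φ.mulVec r + e) + l2 e := by rw [h2]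
    have hWB : l2 (Φ.mulVec r) ≤ ε + l2 e := by linarith
    have hB : 0 ≤ ε + l2 e := le_trans hW hWB
    have hsq : (l2 r) ^ 2 ≤ (1.06 * (ε + l2 e)) ^ 2 := by nlinarith [hlow, hWB, hW]
    have := le_of_pow_le_pow_left₀ two_ne_zero
      (by positivity : (0:ℝ) ≤ 1.06 * (ε + l2 e)) hsq
    linarith
  · intro hy
    set y := Φ.transpose.mulVec (Φ.mulVec r + e) with hydef
    have hspos : (0:ℝ) < (s:ℝ) := by exact_mod_cast hs
    have hc : (0:ℝ) < Real.sqrt (2 * (s:ℝ)) := Real.sqrt_pos.2 (by positivity)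
    have hη : 0 ≤ η := by
      have h0 := (linf_nonneg' y).trans hy
      have := (le_div_iff₀ hc).1 h0
      simpa using this
    have hid : ∑ i, y i * r i = (l2 (Φ.mulVec r))^2 + ∑ j, e j * Φ.mulVec r j := by
      rw [hydef, transpose_inner', l2_sq', ← Finset.sum_add_distrib]
      exact Finset.sum_congr rfl fun j _ => by simp only [Pi.add_apply]; ring
    have habs : |∑ i, y i * r i| ≤ linf y * ∑ i, |r i| := by
      calc |∑ i, y i * r i| ≤ ∑ i, |y i * r i| := Finset.abs_sum_le_sum_abs _ _
        _ = ∑ i, |y i| * |r i| := by simp [abs_mul]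
        _ ≤ ∑ i, linf y * |r i| := Finset.sum_le_sum fun i _ =>
            mul_le_mul_of_nonneg_right (abs_le_linf' y i) (abs_nonneg _)
        _ = linf y * ∑ i, |r i| := by rw [Finset.mul_sum]
    have hcast : ((2 * s : ℕ) : ℝ) = 2 * (s : ℝ) := by push_cast; ring
    have hl1 : ∑ i, |r i| ≤ Real.sqrt (2 * (s:ℝ)) * l2 r := by
      have h := l1_le_sqrt_mul_l2' r (2 * s) hsp
      rwa [hcast] at h
    have hsum_nonneg : (0:ℝ) ≤ ∑ i, |r i| := Finset.sum_nonneg fun i _ => abs_nonneg _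
    have hinner_bound : ∑ i, y i * r i ≤ η * l2 r := by
      calc ∑ i, y i * r i ≤ |∑ i, y i * r i| := le_abs_self _
        _ ≤ linf y * ∑ i, |r i| := habs
        _ ≤ (η / Real.sqrt (2 * (s:ℝ))) * ∑ i, |r i| :=
            mul_le_mul_of_nonneg_right hy hsum_nonneg
        _ ≤ (η / Real.sqrt (2 * (s:ℝ))) * (Real.sqrt (2 * (s:ℝ)) * l2 r) :=
            mul_le_mul_of_nonneg_left hl1 (div_nonneg hη hc.le)
        _ = η * l2 r := by field_simp
    have hew : -(l2 e * l2 (Φ.mulVec r)) ≤ ∑ j, e j * Φ.mulVec r j :=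
      (abs_le.1 (inner_abs_le' e (Φ.mulVec r))).1
    have hWsq : (l2 (Φ.mulVec r))^2 ≤ η * l2 r + l2 e * l2 (Φ.mulVec r) := by
      linarith [hid, hinner_bound, hew]
    have hWle : l2 (Φ.mulVec r) ≤ 1.053 * l2 r := by
      have h2 : (l2 (Φ.mulVec r))^2 ≤ (1.053 * l2 r)^2 := by nlinarith [hhigh, sq_nonneg (l2 r)]
      exact le_of_pow_le_pow_left₀ two_ne_zero (by positivity) h2
    have hkey : 0.9 * (l2 r)^2 ≤ η * l2 r + 1.053 * l2 e * l2 r := by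
      nlinarith [hlow, hWsq, mul_le_mul_of_nonneg_left hWle hE]
    have hRfinal : l2 r ≤ 1.12 * η + 1.17 * l2 e := by
      rcases eq_or_lt_of_le hR with h0 | h0
      · rw [← h0]; linarith
      · have h3 : 0.9 * l2 r ≤ η + 1.053 * l2 e := by nlinarith [hkey, h0]
        linarith
    have : linf r ≤ l2 r :=
      Real.iSup_le (fun i => abs_le_l2' r i) hR
    linarith
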